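/- arXiv:0902.4288 — 4 statements merged into one kernel-verified Lean document; each statement's English description precedes it below -/
import Mathlib

section
/- For any nonzero singular 2×2 real matrix a, the Green L-class L_a and the Green R-class R_a are punctured planes: each is of the form P \ {0} where P is a 2-dimensional linear subspace of M₂(ℝ) ≅ ℝ⁴ contained in the set of singular matrices. -/
open Matrix

private lemma vecMul_vmv (v c r : Fin 2 → ℝ) :
    v ᵥ* vecMulVec c r = (v ⬝ᵥ c) • r := by
  funext j
  simp [Matrix.vecMul, vecMulVec, dotProduct, Fin.sum_univ_two]
  ring

private def rowMap (r : Fin 2 → ℝ) : (Fin 2 → ℝ) →ₗ[ℝ] Matrix (Fin 2) (Fin 2) ℝ where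
  toFun c := vecMulVec c r
  map_add' c d := by ext i j; simp [vecMulVec]; ring
  map_smul' t c := by ext i j; simp [vecMulVec]; ring

private def colMap (c : Fin 2 → ℝ) : (Fin 2 → ℝ) →ₗ[ℝ] Matrix (Fin 2) (Fin 2) ℝ where
  toFun r := vecMulVec c r
  map_add' d e := by ext i j; simp [vecMulVec]; ring
  map_smul' t d := by ext i j; simp [vecMulVec]; ring

private lemma rowMap_inj {r : Fin 2 → ℝ} (hr : r ≠ 0) : Function.Injective (rowMap r) := by
  rw [← LinearMap.ker_eq_bot, eq_bot_iff]
  intro c hc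
  obtain ⟨j, hj⟩ := Function.ne_iff.mp hr
  simp only [LinearMap.mem_ker, rowMap, LinearMap.coe_mk, AddHom.coe_mk] at hc
  simp only [Submodule.mem_bot]
  funext i
  have := congrFun (congrFun hc i) j
  simp [vecMulVec] at this
  simp [this.resolve_right (by simpa using hj)]

private lemma colMap_inj {c : Fin 2 → ℝ} (hc : c ≠ 0) : Function.Injective (colMap c) := by
  rw [← LinearMap.ker_eq_bot, eq_bot_iff]
  intro r hrk
  obtain ⟨i, hi⟩ := Function.ne_iff.mp hc
  simp only [LinearMap.mem_ker, colMap, LinearMap.coe_mk, AddHom.coe_mk] at hrk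
  simp only [Submodule.mem_bot]
  funext j
  have := congrFun (congrFun hrk i) j
  simp [vecMulVec] at this
  simp [this.resolve_left (by simpa using hi)]

private lemma range_vmv (c r : Fin 2 → ℝ) (hc : c ≠ 0) :
    LinearMap.range (vecMulVec c r).vecMulLinear = Submodule.span ℝ {r} := by
  apply le_antisymm
  · rintro w ⟨v, rfl⟩
    rw [vecMulLinear_apply, vecMul_vmv]
    exact Submodule.smul_mem _ _ (Submodule.mem_span_singleton_self r)
  · rw [Submodule.span_singleton_le_iff_mem]
    obtain ⟨i, hi⟩ := Function.ne_iff.mp hc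
    refine ⟨Pi.single i (c i)⁻¹, ?_⟩
    rw [vecMulLinear_apply, vecMul_vmv]
    have h1 : Pi.single i (c i)⁻¹ ⬝ᵥ c = 1 := by
      fin_cases i <;>
        simp_all [dotProduct, Fin.sum_univ_two, Pi.single_apply]
    rw [h1, one_smul]

private lemma ker_vmv (c r : Fin 2 → ℝ) (hr : r ≠ 0) (v : Fin 2 → ℝ) :
    v ∈ LinearMap.ker (vecMulVec c r).vecMulLinear ↔ v ⬝ᵥ c = 0 := by
  rw [LinearMap.mem_ker, vecMulLinear_apply, vecMul_vmv, smul_eq_zero]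
  simp [hr]

private lemma decomp {a : Matrix (Fin 2) (Fin 2) ℝ} (ha : a ≠ 0) (hdet : a.det = 0) :
    ∃ c r : Fin 2 → ℝ, c ≠ 0 ∧ r ≠ 0 ∧ a = vecMulVec c r := by
  rw [det_fin_two] at hdet
  by_cases h0 : a 0 = 0
  · have h1 : a 1 ≠ 0 := by
      intro h1; apply ha; ext i j; fin_cases i <;>
        simp [congrFun h0, congrFun h1]
    refine ⟨![0,1], a 1, by simp [Function.ne_iff], h1, ?_⟩
    ext i j; fin_cases i <;> simp [vecMulVec, congrFun h0]
  · refine ⟨![1, if a 0 0 = 0 then a 1 1 / a 0 1 else a 1 0 / a 0 0], a 0,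
      by simp [Function.ne_iff], h0, ?_⟩
    ext i j
    fin_cases i <;> fin_cases j <;> simp [vecMulVec]
    · by_cases h00 : a 0 0 = 0
      · have h10 : a 1 0 = 0 := by
          have hz : a 0 1 * a 1 0 = 0 := by rw [h00] at hdet; linarith
          rcases mul_eq_zero.mp hz with h | h
          · exfalso
            apply h0; funext j; fin_cases j <;> simp [h00, h]
          · exact h
        simp [h00, h10]
      · rw [if_neg h00]; field_simp
    · by_cases h00 : a 0 0 = 0
      · have h01 : a 0 1 ≠ 0 := by
          intro h; apply h0; funext j; fin_cases j <;> simp [h00, h]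
        rw [if_pos h00]; field_simp
      · rw [if_neg h00]; field_simp; linear_combination hdet

private lemma single_vecMul' (x : Matrix (Fin 2) (Fin 2) ℝ) (i : Fin 2) :
    x.vecMulLinear (Pi.single i 1) = x i := by
  funext j
  rw [vecMulLinear_apply]
  fin_cases i <;>
    simp [Matrix.vecMul, dotProduct, Fin.sum_univ_two, Pi.single_apply]

theorem L_and_R_classes_are_punctured_planes (a : Matrix (Fin 2) (Fin 2) ℝ)
    (ha : a ≠ 0) (hdet : a.det = 0) :
    (∃ P : Submodule ℝ (Matrix (Fin 2) (Fin 2) ℝ), Module.finrank ℝ P = 2 ∧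
      (∀ x ∈ P, x.det = 0) ∧
      {x : Matrix (Fin 2) (Fin 2) ℝ |
          LinearMap.range x.vecMulLinear = LinearMap.range a.vecMulLinear}
        = {x | x ∈ P ∧ x ≠ 0}) ∧
    (∃ P : Submodule ℝ (Matrix (Fin 2) (Fin 2) ℝ), Module.finrank ℝ P = 2 ∧
      (∀ x ∈ P, x.det = 0) ∧
      {x : Matrix (Fin 2) (Fin 2) ℝ |
          LinearMap.ker x.vecMulLinear = LinearMap.ker a.vecMulLinear}
        = {x | x ∈ P ∧ x ≠ 0}) := by
  obtain ⟨c, r, hc, hr, rfl⟩ := decomp ha hdet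
  constructor
  · refine ⟨LinearMap.range (rowMap r), ?_, ?_, ?_⟩
    · rw [LinearMap.finrank_range_of_inj (rowMap_inj hr)]; simp
    · rintro x ⟨d, rfl⟩
      simp [rowMap, det_fin_two, vecMulVec]; ring
    · ext x
      simp only [Set.mem_setOf_eq, LinearMap.mem_range]
      rw [range_vmv c r hc]
      constructor
      · intro hx
        have hx0 : x ≠ 0 := by
          rintro rfl
          have hrmem : r ∈ LinearMap.range (0 : Matrix (Fin 2) (Fin 2) ℝ).vecMulLinear :=
            hx ▸ Submodule.mem_span_singleton_self r
          obtain ⟨v, hv⟩ := hrmem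
          rw [vecMulLinear_apply, Matrix.vecMul_zero] at hv
          exact hr hv.symm
        have hrow : ∀ i, ∃ t : ℝ, t • r = x i := by
          intro i
          have : x i ∈ Submodule.span ℝ {r} := by
            rw [← hx]
            exact ⟨Pi.single i 1, single_vecMul' x i⟩
          exact Submodule.mem_span_singleton.mp this
        obtain ⟨t0, ht0⟩ := hrow 0
        obtain ⟨t1, ht1⟩ := hrow 1
        refine ⟨⟨![t0, t1], ?_⟩, hx0⟩
        ext i j
        fin_cases i <;> simp [rowMap, vecMulVec, ← ht0, ← ht1]
      · rintro ⟨⟨d, rfl⟩, hx0⟩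
        have hd : d ≠ 0 := by
          rintro rfl; exact hx0 (map_zero _)
        exact range_vmv d r hd
  · refine ⟨LinearMap.range (colMap c), ?_, ?_, ?_⟩
    · rw [LinearMap.finrank_range_of_inj (colMap_inj hc)]; simp
    · rintro x ⟨d, rfl⟩
      simp [colMap, det_fin_two, vecMulVec]; ring
    · ext x
      simp only [Set.mem_setOf_eq, LinearMap.mem_range]
      constructor
      · intro hx
        have hx0 : x ≠ 0 := by
          rintro rfl
          have hcmem : c ∈ LinearMap.ker (vecMulVec c r).vecMulLinear := by
            rw [← hx, LinearMap.mem_ker, vecMulLinear_apply, Matrix.vecMul_zero]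
          rw [ker_vmv c r hr] at hcmem
          simp [dotProduct, Fin.sum_univ_two] at hcmem
          apply hc; funext i
          fin_cases i <;> simp <;> nlinarith [sq_nonneg (c 0), sq_nonneg (c 1), hcmem]
        have hkmem : ![-(c 1), c 0] ∈ LinearMap.ker x.vecMulLinear := by
          rw [hx, ker_vmv c r hr]
          simp [dotProduct, Fin.sum_univ_two]; ring
        have hk : ∀ j, c 1 * x 0 j = c 0 * x 1 j := by
          intro j
          have h2 := congrFun (LinearMap.mem_ker.mp hkmem) j
          simp [vecMulLinear_apply, Matrix.vecMul, dotProduct, Fin.sum_univ_two] at h2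
          linarith
        refine ⟨⟨?_, ?_⟩, hx0⟩
        · by_cases h0 : c 0 = 0
          · exact (c 1)⁻¹ • x 1
          · exact (c 0)⁻¹ • x 0
        · by_cases h0 : c 0 = 0
          · have h1 : c 1 ≠ 0 := by
              intro h; apply hc; funext i; fin_cases i <;> simp [h0, h]
            rw [dif_pos h0]
            ext i j
            fin_cases i <;> simp [colMap, vecMulVec, h0]
            · have := hk j
              rw [h0] at this; simp at this
              simp [this.resolve_left h1]
            · field_simp
          · rw [dif_neg h0]
            ext i j
            fin_cases i <;> simp [colMap, vecMulVec]
            · field_simp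
            · have := hk j
              field_simp
              linarith
      · rintro ⟨⟨d, rfl⟩, hx0⟩
        have hd : d ≠ 0 := by
          rintro rfl; exact hx0 (map_zero _)
        ext v
        rw [show (colMap c) d = vecMulVec c d from rfl, ker_vmv c d hd v, ker_vmv c r hr v]
end

section
/- Every punctured plane contained in the set S₂ of singular 2×2 real matrices is either a nontrivial L-class or a nontrivial R-class of S₂: if P is a 2-dimensional linear subspace of M₂(ℝ) with every element of P singular, then all nonzero elements of P share a common range or share a common null space. -/
open Matrix

private lemma comp_ne (u : Fin 2 → ℝ) (hu : u ≠ 0) : u 0 ≠ 0 ∨ u 1 ≠ 0 := by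
  by_contra h
  push_neg at h
  exact hu (funext fun i => by fin_cases i <;> simp [h.1, h.2])

private lemma para {u v : Fin 2 → ℝ} (hu : u ≠ 0) (h : u 0 * v 1 - u 1 * v 0 = 0) :
    ∃ t : ℝ, v = t • u := by
  rcases comp_ne u hu with h0 | h1
  · refine ⟨v 0 / u 0, funext fun i => ?_⟩
    fin_cases i <;> simp only [Fin.zero_eta, Fin.mk_one, Pi.smul_apply, smul_eq_mul] <;> field_simp <;> nlinarith [h]
  · refine ⟨v 1 / u 1, funext fun i => ?_⟩
    fin_cases i <;> simp only [Fin.zero_eta, Fin.mk_one, Pi.smul_apply, smul_eq_mul] <;> field_simp <;> nlinarith [h]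

private lemma vecMul_apply (v : Fin 2 → ℝ) (x : Matrix (Fin 2) (Fin 2) ℝ) (j : Fin 2) :
    (v ᵥ* x) j = v 0 * x 0 j + v 1 * x 1 j := by
  simp [Matrix.vecMul, dotProduct, Fin.sum_univ_two]

/-- rank one decomposition of a nonzero singular 2×2 matrix -/
private lemma decomp_s9 (x : Matrix (Fin 2) (Fin 2) ℝ) (hx : x ≠ 0) (hdet : x.det = 0) :
    ∃ (c r : Fin 2 → ℝ), c ≠ 0 ∧ r ≠ 0 ∧ ∀ p q, x p q = c p * r q := by
  rw [Matrix.det_fin_two] at hdet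
  have hrow : ∃ i : Fin 2, x i ≠ 0 := by
    by_contra h
    push_neg at h
    exact hx (Matrix.ext fun i j => by rw [h i]; rfl)
  obtain ⟨i, hi⟩ := hrow
  fin_cases i
  · obtain ⟨t, ht⟩ := para hi (by linarith : x 0 0 * x 1 1 - x 0 1 * x 1 0 = 0)
    refine ⟨![1, t], x 0, ?_, hi, ?_⟩
    · intro h0
      have : (1 : ℝ) = 0 := by
        have := congrFun h0 0; simpa using this
      norm_num at this
    · intro p q
      fin_cases p
      · simp
      · simp [congrFun ht q]
  · obtain ⟨t, ht⟩ := para hi (by linarith : x 1 0 * x 0 1 - x 1 1 * x 0 0 = 0)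
    refine ⟨![t, 1], x 1, ?_, hi, ?_⟩
    · intro h0
      have : (1 : ℝ) = 0 := by
        have := congrFun h0 1; simpa using this
      norm_num at this
    · intro p q
      fin_cases p
      · simp [congrFun ht q]
      · simp

private lemma ker_char (x : Matrix (Fin 2) (Fin 2) ℝ) (c r : Fin 2 → ℝ) (hr : r ≠ 0)
    (hx : ∀ p q, x p q = c p * r q) (v : Fin 2 → ℝ) :
    x.vecMulLinear v = 0 ↔ v 0 * c 0 + v 1 * c 1 = 0 := by
  rw [Matrix.vecMulLinear_apply]
  constructor
  · intro h0
    obtain ⟨q, hq⟩ : ∃ q : Fin 2, r q ≠ 0 := by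
      rcases comp_ne r hr with h | h
      exacts [⟨0, h⟩, ⟨1, h⟩]
    have := congrFun h0 q
    rw [vecMul_apply, hx, hx] at this
    simp only [Pi.zero_apply] at this
    have h2 : (v 0 * c 0 + v 1 * c 1) * r q = 0 := by ring_nf; ring_nf at this; linarith
    exact (mul_eq_zero.mp h2).resolve_right hq
  · intro h
    funext q
    rw [vecMul_apply, hx, hx]
    simp only [Pi.zero_apply]
    linear_combination r q * h

private lemma range_char (x : Matrix (Fin 2) (Fin 2) ℝ) (c r : Fin 2 → ℝ) (hc : c ≠ 0)
    (hx : ∀ p q, x p q = c p * r q) :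
    LinearMap.range x.vecMulLinear = Submodule.span ℝ {r} := by
  apply le_antisymm
  · rintro w ⟨v, rfl⟩
    rw [Matrix.vecMulLinear_apply]
    rw [Submodule.mem_span_singleton]
    refine ⟨v 0 * c 0 + v 1 * c 1, funext fun q => ?_⟩
    rw [vecMul_apply, hx, hx]
    simp only [Pi.smul_apply, smul_eq_mul]
    ring
  · rw [Submodule.span_le, Set.singleton_subset_iff]
    rcases comp_ne c hc with h | h
    · refine ⟨![(c 0)⁻¹, 0], funext fun q => ?_⟩
      rw [Matrix.vecMulLinear_apply, vecMul_apply, hx, hx]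
      simp only [Matrix.cons_val_zero, Matrix.cons_val_one, Matrix.head_cons, zero_mul, add_zero]
      field_simp
    · refine ⟨![0, (c 1)⁻¹], funext fun q => ?_⟩
      rw [Matrix.vecMulLinear_apply, vecMul_apply, hx, hx]
      simp only [Matrix.cons_val_zero, Matrix.cons_val_one, Matrix.head_cons, zero_mul, zero_add]
      field_simp

private lemma pairwise (a b : Matrix (Fin 2) (Fin 2) ℝ) (ha : a ≠ 0) (hb : b ≠ 0)
    (hda : a.det = 0) (hdb : b.det = 0) (hD : (a + b).det = 0) :
    LinearMap.range a.vecMulLinear = LinearMap.range b.vecMulLinear ∨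
    LinearMap.ker a.vecMulLinear = LinearMap.ker b.vecMulLinear := by
  obtain ⟨c, r, hc, hr, hxa⟩ := decomp_s9 a ha hda
  obtain ⟨c', r', hc', hr', hxb⟩ := decomp_s9 b hb hdb
  -- key : cross(c,c') * cross(r,r') = 0
  have hkey : (c 0 * c' 1 - c 1 * c' 0) * (r 0 * r' 1 - r 1 * r' 0) = 0 := by
    rw [Matrix.det_fin_two] at hda hdb hD
    simp only [Matrix.add_apply] at hD
    simp only [hxa, hxb] at hda hdb hD
    linear_combination hD - hda - hdb
  rcases mul_eq_zero.mp hkey with hcc | hrr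
  · -- kernels equal
    right
    obtain ⟨t, ht⟩ := para hc hcc
    have ht0 : t ≠ 0 := by
      rintro rfl
      simp at ht
      exact hc' ht
    ext v
    rw [LinearMap.mem_ker, LinearMap.mem_ker, ker_char a c r hr hxa, ker_char b c' r' hr' hxb,
      ht]
    simp only [Pi.smul_apply, smul_eq_mul]
    constructor
    · intro h
      linear_combination t * h
    · intro h
      have h2 : t * (v 0 * c 0 + v 1 * c 1) = 0 := by linear_combination h
      exact (mul_eq_zero.mp h2).resolve_left ht0
  · -- ranges equal
    left
    obtain ⟨t, ht⟩ := para hr hrr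
    have ht0 : t ≠ 0 := by
      rintro rfl
      simp at ht
      exact hr' ht
    rw [range_char a c r hc hxa, range_char b c' r' hc' hxb, ht]
    apply le_antisymm
    · rw [Submodule.span_le, Set.singleton_subset_iff, SetLike.mem_coe,
        Submodule.mem_span_singleton]
      exact ⟨t⁻¹, by rw [smul_smul, inv_mul_cancel₀ ht0, one_smul]⟩
    · rw [Submodule.span_le, Set.singleton_subset_iff, SetLike.mem_coe,
        Submodule.mem_span_singleton]
      exact ⟨t, rfl⟩

theorem punctured_plane_is_L_or_R_class (P : Submodule ℝ (Matrix (Fin 2) (Fin 2) ℝ))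
    (hdim : Module.finrank ℝ P = 2) (hsing : ∀ x ∈ P, x.det = 0) :
    (∀ x ∈ P, x ≠ 0 → ∀ y ∈ P, y ≠ 0 →
        LinearMap.range x.vecMulLinear = LinearMap.range y.vecMulLinear) ∨
    (∀ x ∈ P, x ≠ 0 → ∀ y ∈ P, y ≠ 0 →
        LinearMap.ker x.vecMulLinear = LinearMap.ker y.vecMulLinear) := by
  have pw : ∀ x ∈ P, x ≠ 0 → ∀ y ∈ P, y ≠ 0 →
      LinearMap.range x.vecMulLinear = LinearMap.range y.vecMulLinear ∨
      LinearMap.ker x.vecMulLinear = LinearMap.ker y.vecMulLinear := by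
    intro x hx hx0 y hy hy0
    exact pairwise x y hx0 hy0 (hsing x hx) (hsing y hy) (hsing _ (P.add_mem hx hy))
  by_cases hL : ∀ x ∈ P, x ≠ 0 → ∀ y ∈ P, y ≠ 0 →
      LinearMap.range x.vecMulLinear = LinearMap.range y.vecMulLinear
  · exact Or.inl hL
  · right
    push_neg at hL
    obtain ⟨a, haP, ha0, b, hbP, hb0, hab⟩ := hL
    have hkab : LinearMap.ker a.vecMulLinear = LinearMap.ker b.vecMulLinear :=
      (pw a haP ha0 b hbP hb0).resolve_left hab
    have key : ∀ z ∈ P, z ≠ 0 → LinearMap.ker z.vecMulLinear = LinearMap.ker a.vecMulLinear := by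
      intro z hz hz0
      rcases pw z hz hz0 a haP ha0 with hra | hka
      · rcases pw z hz hz0 b hbP hb0 with hrb | hkb
        · exact absurd (hra ▸ hrb) hab
        · rw [hkb, ← hkab]
      · exact hka
    intro x hx hx0 y hy hy0
    rw [key x hx hx0, key y hy hy0]
end

section
/- For a rank-1 idempotent e ∈ M₂(ℝ), the set of idempotents in the L-class of e equals e + (1-e)·S₂·e, and the set of idempotents in the R-class of e equals e + e·S₂·(1-e); in particular each of these sets is an affine line through e consisting entirely of idempotents. -/
open Matrix

private lemma vm_ext {M N : Matrix (Fin 2) (Fin 2) ℝ}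
    (h : ∀ x : Fin 2 → ℝ, x ᵥ* M = x ᵥ* N) : M = N := by
  ext i j
  have := congrFun (h (Pi.single i 1)) j
  simpa [Matrix.single_one_vecMul] using this

private lemma range_le {A B : Matrix (Fin 2) (Fin 2) ℝ} (h : A * B = A) :
    LinearMap.range A.vecMulLinear ≤ LinearMap.range B.vecMulLinear := by
  rintro _ ⟨x, rfl⟩
  refine ⟨x ᵥ* A, ?_⟩
  simp only [Matrix.vecMulLinear_apply, vecMul_vecMul, h]

private lemma ker_le {A B : Matrix (Fin 2) (Fin 2) ℝ} (h : A * B = B) :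
    LinearMap.ker A.vecMulLinear ≤ LinearMap.ker B.vecMulLinear := by
  intro x hx
  rw [LinearMap.mem_ker, Matrix.vecMulLinear_apply] at hx ⊢
  rw [← h, ← vecMul_vecMul, hx, Matrix.zero_vecMul]


private lemma scale_aux {A B : Matrix (Fin 2) (Fin 2) ℝ} {NUM DEN : ℝ} (hpiv : DEN ≠ 0)
    (key : DEN • A = NUM • B) : ∃ t : ℝ, A = t • B := by
  refine ⟨NUM / DEN, ?_⟩
  calc A = (DEN⁻¹ * DEN) • A := by rw [inv_mul_cancel₀ hpiv, one_smul]
    _ = DEN⁻¹ • (DEN • A) := mul_smul _ _ _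
    _ = DEN⁻¹ • (NUM • B) := by rw [key]
    _ = (NUM / DEN) • B := by rw [smul_smul, inv_mul_eq_div]

private lemma lineL (a b c p q r w : ℝ) (hC : b * c = a - a * a) :
    ∃ t : ℝ, (1 - !![a,b;c,1-a]) * !![p,q;r,w] * !![a,b;c,1-a]
      = t • ((1 - !![a,b;c,1-a]) * !![(0:ℝ),-1;1,0] * !![a,b;c,1-a]) := by
  by_cases hpiv : c^2 + a^2 = 0
  · have ha : a = 0 := by nlinarith [sq_nonneg a, sq_nonneg c]
    have hc : c = 0 := by nlinarith [sq_nonneg a, sq_nonneg c]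
    have hpiv2 : (-1 - b^2 + 2*a - a^2) ≠ 0 := by
      intro h; rw [ha] at h; nlinarith [sq_nonneg b]
    apply scale_aux (NUM := q - b*w + b*p - b^2*r - 2*a*q + a*b*w - a*b*p + a^2*q) hpiv2
    ext i j
    fin_cases i <;> fin_cases j <;>
      simp [Matrix.mul_apply, Fin.sum_univ_two, Matrix.sub_apply, Matrix.one_apply]
    · linear_combination (p - b*r - b*q + b^2*w - 2*a*p + a*b*r + a*b*q + a^2*p) * hC
    · linear_combination (0 : ℝ) * hC
    · linear_combination (c*w - c*p + b*c*r + b*c*q + a*r + a*q - a*c*w + a*c*p - a*b*w + a*b*p - a^2*r - a^2*q) * hC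
    · linear_combination (w + b*r + b*q + b^2*p - 2*a*w - a*b*r - a*b*q + a^2*w) * hC
  · apply scale_aux (NUM := -c^2*q + a*c*w - a*c*p + a^2*r) hpiv
    ext i j
    fin_cases i <;> fin_cases j <;>
      simp [Matrix.mul_apply, Fin.sum_univ_two, Matrix.sub_apply, Matrix.one_apply]
    · linear_combination (-c^2*w - a*c*r - a*c*q - a^2*p) * hC
    · linear_combination (-c*w + c*p - b*c*r - b*c*q - a*r - a*q + a*c*w - a*c*p + a*b*w - a*b*p + a^2*r + a^2*q) * hC
    · linear_combination (0:ℝ) * hC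
    · linear_combination (-c^2*p + a*c*r + a*c*q - a^2*w) * hC

private lemma lineR (a b c p q r w : ℝ) (hC : b * c = a - a * a) :
    ∃ t : ℝ, !![a,b;c,1-a] * !![p,q;r,w] * (1 - !![a,b;c,1-a])
      = t • (!![a,b;c,1-a] * !![(0:ℝ),-1;1,0] * (1 - !![a,b;c,1-a])) := by
  by_cases hpiv : -b^2 - a^2 = 0
  · have ha : a = 0 := by nlinarith [sq_nonneg a, sq_nonneg b]
    have hpiv2 : (1 + c^2 - 2*a + a^2) ≠ 0 := by
      intro h; rw [ha] at h; nlinarith [sq_nonneg c]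
    apply scale_aux (NUM := r - c*w + c*p - c^2*q - 2*a*r + a*c*w - a*c*p + a^2*r) hpiv2
    ext i j
    fin_cases i <;> fin_cases j <;>
      simp [Matrix.mul_apply, Fin.sum_univ_two, Matrix.sub_apply, Matrix.one_apply,
        Matrix.vecMul, dotProduct, Matrix.vecHead, Matrix.vecTail]
    · linear_combination (-p + c*r + c*q - c^2*w + 2*a*p - a*c*r - a*c*q - a^2*p) * hC
    · linear_combination (-b*w + b*p - b*c*r - b*c*q - a*r - a*q + a*c*w - a*c*p + a*b*w - a*b*p + a^2*r + a^2*q) * hC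
    · linear_combination (0:ℝ) * hC
    · linear_combination (-w - c*r - c*q - c^2*p + 2*a*w + a*c*r + a*c*q - a^2*w) * hC
  · apply scale_aux (NUM := -b^2*r + a*b*w - a*b*p + a^2*q) hpiv
    ext i j
    fin_cases i <;> fin_cases j <;>
      simp [Matrix.mul_apply, Fin.sum_univ_two, Matrix.sub_apply, Matrix.one_apply,
        Matrix.vecMul, dotProduct, Matrix.vecHead, Matrix.vecTail]
    · linear_combination (b^2*w + a*b*r + a*b*q + a^2*p) * hC
    · linear_combination (0:ℝ) * hC
    · linear_combination (b*w - b*p + b*c*r + b*c*q + a*r + a*q - a*c*w + a*c*p - a*b*w + a*b*p - a^2*r - a^2*q) * hC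
    · linear_combination (b^2*p - a*b*r - a*b*q + a^2*w) * hC


private lemma dLne (a b c : ℝ) :
    (1 - !![a,b;c,1-a]) * !![(0:ℝ),-1;1,0] * !![a,b;c,1-a] ≠ 0 := by
  intro h
  have h1 := congrFun (congrFun h 1) 0
  have h2 := congrFun (congrFun h 0) 1
  simp [Matrix.mul_apply, Fin.sum_univ_two, Matrix.sub_apply, Matrix.one_apply] at h1 h2
  nlinarith [sq_nonneg a, sq_nonneg b, sq_nonneg c, h1, h2]

private lemma dRne (a b c : ℝ) :
    !![a,b;c,1-a] * !![(0:ℝ),-1;1,0] * (1 - !![a,b;c,1-a]) ≠ 0 := by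
  intro h
  have h1 := congrFun (congrFun h 1) 0
  have h2 := congrFun (congrFun h 0) 1
  simp [Matrix.mul_apply, Fin.sum_univ_two, Matrix.sub_apply, Matrix.one_apply] at h1 h2
  nlinarith [sq_nonneg a, sq_nonneg b, sq_nonneg c, h1, h2]

theorem idempotents_in_L_R_classes (e : Matrix (Fin 2) (Fin 2) ℝ)
    (he : e * e = e) (hrank : e.rank = 1) :
    ({f : Matrix (Fin 2) (Fin 2) ℝ | f * f = f ∧
        LinearMap.range f.vecMulLinear = LinearMap.range e.vecMulLinear}
      = {x | ∃ s : Matrix (Fin 2) (Fin 2) ℝ, s.det = 0 ∧ x = e + (1 - e) * s * e}) ∧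
    ({f : Matrix (Fin 2) (Fin 2) ℝ | f * f = f ∧
        LinearMap.ker f.vecMulLinear = LinearMap.ker e.vecMulLinear}
      = {x | ∃ s : Matrix (Fin 2) (Fin 2) ℝ, s.det = 0 ∧ x = e + e * s * (1 - e)}) ∧
    (∃ d : Matrix (Fin 2) (Fin 2) ℝ, d ≠ 0 ∧
      {f : Matrix (Fin 2) (Fin 2) ℝ | f * f = f ∧
          LinearMap.range f.vecMulLinear = LinearMap.range e.vecMulLinear}
        = {x | ∃ t : ℝ, x = e + t • d}) ∧
    (∃ d : Matrix (Fin 2) (Fin 2) ℝ, d ≠ 0 ∧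
      {f : Matrix (Fin 2) (Fin 2) ℝ | f * f = f ∧
          LinearMap.ker f.vecMulLinear = LinearMap.ker e.vecMulLinear}
        = {x | ∃ t : ℝ, x = e + t • d}) := by
  have hA : e * (1 - e) = 0 := by rw [mul_sub, mul_one, he, sub_self]
  have hB : (1 - e) * e = 0 := by rw [sub_mul, one_mul, he, sub_self]
  have hnn : (1 - e) * (1 - e) = 1 - e := by rw [mul_sub, mul_one, hB, sub_zero]
  -- Part 1
  have part1 : {f : Matrix (Fin 2) (Fin 2) ℝ | f * f = f ∧
        LinearMap.range f.vecMulLinear = LinearMap.range e.vecMulLinear}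
      = {x | ∃ s : Matrix (Fin 2) (Fin 2) ℝ, s.det = 0 ∧ x = e + (1 - e) * s * e} := by
    ext f
    simp only [Set.mem_setOf_eq]
    constructor
    · rintro ⟨hf, hr⟩
      have hef : e * f = e := by
        apply vm_ext; intro y
        obtain ⟨x, hx⟩ : y ᵥ* e ∈ LinearMap.range f.vecMulLinear := by
          rw [hr]; exact ⟨y, rfl⟩
        rw [Matrix.vecMulLinear_apply] at hx
        calc y ᵥ* (e * f) = (y ᵥ* e) ᵥ* f := (vecMul_vecMul _ _ _).symm
          _ = (x ᵥ* f) ᵥ* f := by rw [hx]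
          _ = x ᵥ* (f * f) := vecMul_vecMul _ _ _
          _ = y ᵥ* e := by rw [hf, hx]
      have hfe : f * e = f := by
        apply vm_ext; intro y
        obtain ⟨x, hx⟩ : y ᵥ* f ∈ LinearMap.range e.vecMulLinear := by
          rw [← hr]; exact ⟨y, rfl⟩
        rw [Matrix.vecMulLinear_apply] at hx
        calc y ᵥ* (f * e) = (y ᵥ* f) ᵥ* e := (vecMul_vecMul _ _ _).symm
          _ = (x ᵥ* e) ᵥ* e := by rw [hx]
          _ = x ᵥ* (e * e) := vecMul_vecMul _ _ _
          _ = y ᵥ* f := by rw [he, hx]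
      refine ⟨f - e, ?_, ?_⟩
      · have hsq : (f - e) * (f - e) = 0 := by
          have h4 : (f - e) * (f - e) = f * f - f * e - e * f + e * e := by noncomm_ring
          rw [h4, hf, hfe, hef, he]; abel
        have h5 : (f - e).det * (f - e).det = 0 := by
          rw [← Matrix.det_mul, hsq]; simp
        exact mul_self_eq_zero.1 h5
      · have h3 : (1 - e) * (f - e) * e = f - e := by
          have h4 : (1 - e) * (f - e) * e = f * e - e * e - e * (f * e) + e * (e * e) := by
            noncomm_ring
          rw [h4]
          simp only [hfe, hef, he]
          abel
        rw [h3]; abel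
    · rintro ⟨s, hs, rfl⟩
      have hge : ((1 - e) * s * e) * e = (1 - e) * s * e := by
        rw [Matrix.mul_assoc ((1 - e) * s) e e, he]
      have heg : e * ((1 - e) * s * e) = 0 := by
        calc e * ((1 - e) * s * e) = (e * (1 - e)) * (s * e) := by
              rw [Matrix.mul_assoc, Matrix.mul_assoc]
          _ = 0 := by rw [hA, Matrix.zero_mul]
      have hgg : ((1 - e) * s * e) * ((1 - e) * s * e) = 0 := by
        calc ((1 - e) * s * e) * ((1 - e) * s * e)
            = ((1 - e) * s) * (e * ((1 - e) * s * e)) := by rw [Matrix.mul_assoc]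
          _ = 0 := by rw [heg, Matrix.mul_zero]
      have hff : (e + (1 - e) * s * e) * (e + (1 - e) * s * e) = e + (1 - e) * s * e := by
        rw [add_mul, mul_add, mul_add, he, heg, hge, hgg, add_zero, add_zero]
      refine ⟨hff, le_antisymm (range_le ?_) (range_le ?_)⟩
      · rw [add_mul, he, hge]
      · rw [mul_add, he, heg, add_zero]
  -- Part 2
  have part2 : {f : Matrix (Fin 2) (Fin 2) ℝ | f * f = f ∧
        LinearMap.ker f.vecMulLinear = LinearMap.ker e.vecMulLinear}
      = {x | ∃ s : Matrix (Fin 2) (Fin 2) ℝ, s.det = 0 ∧ x = e + e * s * (1 - e)} := by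
    ext f
    simp only [Set.mem_setOf_eq]
    constructor
    · rintro ⟨hf, hk⟩
      have hfe : f * e = e := by
        apply vm_ext; intro y
        have h1 : (y ᵥ* f - y) ∈ LinearMap.ker f.vecMulLinear := by
          rw [LinearMap.mem_ker, map_sub, Matrix.vecMulLinear_apply, Matrix.vecMulLinear_apply,
            vecMul_vecMul, hf, sub_self]
        rw [hk, LinearMap.mem_ker, Matrix.vecMulLinear_apply, Matrix.sub_vecMul, sub_eq_zero] at h1
        calc y ᵥ* (f * e) = (y ᵥ* f) ᵥ* e := (vecMul_vecMul _ _ _).symm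
          _ = y ᵥ* e := h1
      have hef : e * f = f := by
        apply vm_ext; intro y
        have h1 : (y ᵥ* e - y) ∈ LinearMap.ker e.vecMulLinear := by
          rw [LinearMap.mem_ker, map_sub, Matrix.vecMulLinear_apply, Matrix.vecMulLinear_apply,
            vecMul_vecMul, he, sub_self]
        rw [← hk, LinearMap.mem_ker, Matrix.vecMulLinear_apply, Matrix.sub_vecMul,
          sub_eq_zero] at h1
        calc y ᵥ* (e * f) = (y ᵥ* e) ᵥ* f := (vecMul_vecMul _ _ _).symm
          _ = y ᵥ* f := h1
      refine ⟨f - e, ?_, ?_⟩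
      · have hsq : (f - e) * (f - e) = 0 := by
          have h4 : (f - e) * (f - e) = f * f - f * e - e * f + e * e := by noncomm_ring
          rw [h4, hf, hfe, hef, he]; abel
        have h5 : (f - e).det * (f - e).det = 0 := by
          rw [← Matrix.det_mul, hsq]; simp
        exact mul_self_eq_zero.1 h5
      · have h3 : e * (f - e) * (1 - e) = f - e := by
          have h4 : e * (f - e) * (1 - e) = e * f - e * e - (e * f) * e + e * e * e := by
            noncomm_ring
          rw [h4]
          simp only [hef, hfe, he]
          abel
        rw [h3]; abel
    · rintro ⟨s, hs, rfl⟩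
      have heg : e * (e * s * (1 - e)) = e * s * (1 - e) := by
        have h' : e * (e * s * (1 - e)) = (e * e) * s * (1 - e) := by noncomm_ring
        rw [h', he]
      have hge : (e * s * (1 - e)) * e = 0 := by
        have h' : (e * s * (1 - e)) * e = (e * s) * ((1 - e) * e) := by noncomm_ring
        rw [h', hB, Matrix.mul_zero]
      have hgg : (e * s * (1 - e)) * (e * s * (1 - e)) = 0 := by
        have h' : (e * s * (1 - e)) * (e * s * (1 - e))
            = ((e * s * (1 - e)) * e) * (s * (1 - e)) := by noncomm_ring
        rw [h', hge, Matrix.zero_mul]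
      have hff : (e + e * s * (1 - e)) * (e + e * s * (1 - e)) = e + e * s * (1 - e) := by
        rw [add_mul, mul_add, mul_add, he, heg, hge, hgg, add_zero, add_zero]
      refine ⟨hff, le_antisymm (ker_le ?_) (ker_le ?_)⟩
      · rw [add_mul, he, hge, add_zero]
      · rw [mul_add, he, heg]
  -- coordinate facts
  have hdet : e.det = 0 := by
    by_contra h
    have hu : IsUnit e := (Matrix.isUnit_iff_isUnit_det e).2 (isUnit_iff_ne_zero.2 h)
    have h2 := Matrix.rank_of_isUnit e hu
    rw [hrank] at h2
    simp at h2
  have hne0 : e ≠ 0 := by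
    intro h
    rw [h, Matrix.rank_zero] at hrank
    norm_num at hrank
  have h00 : e 0 0 * e 0 0 + e 0 1 * e 1 0 = e 0 0 := by
    have h' := congrFun (congrFun he 0) 0
    simpa [Matrix.mul_apply, Fin.sum_univ_two] using h'
  have h01 : e 0 0 * e 0 1 + e 0 1 * e 1 1 = e 0 1 := by
    have h' := congrFun (congrFun he 0) 1
    simpa [Matrix.mul_apply, Fin.sum_univ_two] using h'
  have h10 : e 1 0 * e 0 0 + e 1 1 * e 1 0 = e 1 0 := by
    have h' := congrFun (congrFun he 1) 0
    simpa [Matrix.mul_apply, Fin.sum_univ_two] using h'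
  have h11 : e 1 0 * e 0 1 + e 1 1 * e 1 1 = e 1 1 := by
    have h' := congrFun (congrFun he 1) 1
    simpa [Matrix.mul_apply, Fin.sum_univ_two] using h'
  have hdet2 : e 0 0 * e 1 1 - e 0 1 * e 1 0 = 0 := by
    rw [← Matrix.det_fin_two]; exact hdet
  have htr : e 0 0 + e 1 1 = 1 := by
    by_contra htr
    have hb : e 0 1 = 0 := by
      rcases mul_eq_zero.1 (show e 0 1 * (e 0 0 + e 1 1 - 1) = 0 by
          linear_combination h01) with h' | h'
      · exact h'
      · exact absurd (by linarith) htr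
    have hc : e 1 0 = 0 := by
      rcases mul_eq_zero.1 (show e 1 0 * (e 0 0 + e 1 1 - 1) = 0 by
          linear_combination h10) with h' | h'
      · exact h'
      · exact absurd (by linarith) htr
    have ha : e 0 0 = 0 ∨ e 0 0 = 1 := by
      rcases mul_eq_zero.1 (show e 0 0 * (e 0 0 - 1) = 0 by
          linear_combination h00 - e 1 0 * hb) with h' | h'
      · exact Or.inl h'
      · exact Or.inr (by linarith)
    have hd : e 1 1 = 0 ∨ e 1 1 = 1 := by
      rcases mul_eq_zero.1 (show e 1 1 * (e 1 1 - 1) = 0 by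
          linear_combination h11 - e 0 1 * hc) with h' | h'
      · exact Or.inl h'
      · exact Or.inr (by linarith)
    have had : e 0 0 * e 1 1 = 0 := by linear_combination hdet2 + e 1 0 * hb
    rcases ha with ha | ha <;> rcases hd with hd | hd
    · refine hne0 ?_
      ext i j
      fin_cases i <;> fin_cases j <;> simp [ha, hb, hc, hd]
    · exact htr (by rw [ha, hd]; norm_num)
    · exact htr (by rw [ha, hd]; norm_num)
    · rw [ha, hd] at had; norm_num at had
  have hC : e 0 1 * e 1 0 = e 0 0 - e 0 0 * e 0 0 := by linear_combination h00
  have hE : e = !![e 0 0, e 0 1; e 1 0, 1 - e 0 0] := by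
    have hdd : e 1 1 = 1 - e 0 0 := by linarith
    rw [← hdd]
    exact Matrix.eta_fin_two e
  refine ⟨part1, part2, ?_, ?_⟩
  · refine ⟨(1 - e) * !![(0:ℝ), -1; 1, 0] * e, ?_, ?_⟩
    · rw [hE]; exact dLne _ _ _
    · rw [part1]
      ext x
      simp only [Set.mem_setOf_eq]
      constructor
      · rintro ⟨s, hs, rfl⟩
        obtain ⟨t, ht⟩ : ∃ t : ℝ,
            (1 - e) * s * e = t • ((1 - e) * !![(0:ℝ), -1; 1, 0] * e) := by
          rw [hE, Matrix.eta_fin_two s]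
          exact lineL _ _ _ _ _ _ _ hC
        exact ⟨t, by rw [ht]⟩
      · rintro ⟨t, rfl⟩
        have hd2 : ((1 - e) * !![(0:ℝ), -1; 1, 0] * e) *
            ((1 - e) * !![(0:ℝ), -1; 1, 0] * e) = 0 := by
          have h' : ((1 - e) * !![(0:ℝ), -1; 1, 0] * e) *
              ((1 - e) * !![(0:ℝ), -1; 1, 0] * e)
              = ((1 - e) * !![(0:ℝ), -1; 1, 0]) * (e * (1 - e)) *
                (!![(0:ℝ), -1; 1, 0] * e) := by
            noncomm_ring
          rw [h', hA, Matrix.mul_zero, Matrix.zero_mul]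
        have hdet0 : ((1 - e) * !![(0:ℝ), -1; 1, 0] * e).det = 0 :=
          mul_self_eq_zero.1 (by rw [← Matrix.det_mul, hd2]; simp)
        have hfix : (1 - e) * ((1 - e) * !![(0:ℝ), -1; 1, 0] * e) * e
            = (1 - e) * !![(0:ℝ), -1; 1, 0] * e := by
          have h' : (1 - e) * ((1 - e) * !![(0:ℝ), -1; 1, 0] * e) * e
              = ((1 - e) * (1 - e)) * !![(0:ℝ), -1; 1, 0] * (e * e) := by noncomm_ring
          rw [h', hnn, he]
        refine ⟨t • ((1 - e) * !![(0:ℝ), -1; 1, 0] * e), ?_, ?_⟩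
        · rw [Matrix.det_smul, hdet0, mul_zero]
        · rw [Matrix.mul_smul, Matrix.smul_mul, hfix]
  · refine ⟨e * !![(0:ℝ), -1; 1, 0] * (1 - e), ?_, ?_⟩
    · rw [hE]; exact dRne _ _ _
    · rw [part2]
      ext x
      simp only [Set.mem_setOf_eq]
      constructor
      · rintro ⟨s, hs, rfl⟩
        obtain ⟨t, ht⟩ : ∃ t : ℝ,
            e * s * (1 - e) = t • (e * !![(0:ℝ), -1; 1, 0] * (1 - e)) := by
          rw [hE, Matrix.eta_fin_two s]
          exact lineR _ _ _ _ _ _ _ hC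
        exact ⟨t, by rw [ht]⟩
      · rintro ⟨t, rfl⟩
        have hd2 : (e * !![(0:ℝ), -1; 1, 0] * (1 - e)) *
            (e * !![(0:ℝ), -1; 1, 0] * (1 - e)) = 0 := by
          have h' : (e * !![(0:ℝ), -1; 1, 0] * (1 - e)) *
              (e * !![(0:ℝ), -1; 1, 0] * (1 - e))
              = (e * !![(0:ℝ), -1; 1, 0]) * ((1 - e) * e) *
                (!![(0:ℝ), -1; 1, 0] * (1 - e)) := by
            noncomm_ring
          rw [h', hB, Matrix.mul_zero, Matrix.zero_mul]
        have hdet0 : (e * !![(0:ℝ), -1; 1, 0] * (1 - e)).det = 0 :=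
          mul_self_eq_zero.1 (by rw [← Matrix.det_mul, hd2]; simp)
        have hfix : e * (e * !![(0:ℝ), -1; 1, 0] * (1 - e)) * (1 - e)
            = e * !![(0:ℝ), -1; 1, 0] * (1 - e) := by
          have h' : e * (e * !![(0:ℝ), -1; 1, 0] * (1 - e)) * (1 - e)
              = (e * e) * !![(0:ℝ), -1; 1, 0] * ((1 - e) * (1 - e)) := by noncomm_ring
          rw [h', hnn, he]
        refine ⟨t • (e * !![(0:ℝ), -1; 1, 0] * (1 - e)), ?_, ?_⟩
        · rw [Matrix.det_smul, hdet0, mul_zero]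
        · rw [Matrix.mul_smul, Matrix.smul_mul, hfix]
end

section
/- For a nonzero singular 2×2 real matrix a, the set of semigroup-theoretic inverses of a (matrices x with a·x·a = a and x·a·x = x) equals SP(a;1) = {x : det x = 0, tr(a·x) = 1}. -/
open Matrix

lemma key_axa (a x : Matrix (Fin 2) (Fin 2) ℝ) (h : a.det = 0) :
    a * x * a = (a * x).trace • a := by
  rw [Matrix.det_fin_two] at h
  ext i j
  fin_cases i <;> fin_cases j <;>
    simp [Matrix.mul_apply, Fin.sum_univ_two, Matrix.trace_fin_two]
  · linear_combination (-(x 1 1)) * h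
  · linear_combination (x 0 1) * h
  · linear_combination (x 1 0) * h
  · linear_combination (-(x 0 0)) * h

theorem inverses_eq_SP_a_one (a : Matrix (Fin 2) (Fin 2) ℝ)
    (ha : a ≠ 0) (hdet : a.det = 0) :
    {x : Matrix (Fin 2) (Fin 2) ℝ | a * x * a = a ∧ x * a * x = x}
      = {x : Matrix (Fin 2) (Fin 2) ℝ | x.det = 0 ∧ (a * x).trace = 1} := by
  ext x
  simp only [Set.mem_setOf_eq]
  constructor
  · rintro ⟨h1, h2⟩
    have hxd : x.det = 0 := by
      have : x.det = (x * a * x).det := by rw [h2]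
      rw [Matrix.det_mul, Matrix.det_mul, hdet] at this
      simpa using this
    refine ⟨hxd, ?_⟩
    have hax : a * x ≠ 0 := by
      intro h0
      apply ha
      rw [← h1, h0, zero_mul]
    have hidem : (a * x) * (a * x) = a * x := by
      rw [mul_assoc, ← mul_assoc x a x, h2]
    have hkey := key_axa a x hdet
    have h3 : a * x = (a * x).trace • (a * x) := by
      calc a * x = (a * x) * (a * x) := hidem.symm
        _ = (a * x * a) * x := (mul_assoc (a*x) a x).symm
        _ = ((a * x).trace • a) * x := by rw [hkey]
        _ = (a * x).trace • (a * x) := by rw [smul_mul_assoc]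
    have : ((a * x).trace - 1) • (a * x) = 0 := by
      rw [sub_smul, one_smul, ← h3, sub_self]
    rcases smul_eq_zero.mp this with h | h
    · linarith [sub_eq_zero.mp (by linarith [h] : (a * x).trace - 1 = 0)]
    · exact absurd h hax
  · rintro ⟨hx, ht⟩
    constructor
    · rw [key_axa a x hdet, ht, one_smul]
    · rw [key_axa x a hx, Matrix.trace_mul_comm, ht, one_smul]
end
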